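/- Fix C > 0, c > 0 and m ∈ ℕ, m ≥ 1. Let (r_ε)_{ε∈(0,1]} and r be probability measures on ℝ, all with support contained in [−C,C], such that r_ε converges weakly to r as ε ↘ 0. Let H : ℝ^m → ℝ be continuous with |H(s_1,…,s_m)| ≤ K e^{κ(|s_1|+⋯+|s_m|)} for some constants K, κ > 0. Then ∫_{ℝ^m} H d(ρ_{c,r_ε})^{⊗m} → ∫_{ℝ^m} H d(ρ_{c,r})^{⊗m} as ε ↘ 0, where (ρ_{c,r})^{⊗m} denotes the m-fold product measure. -/

import Mathlib

open MeasureTheory Filter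

/-- Convolution of two measures on `ℝ` (law of the sum of independent variables). -/
noncomputable def mconv (μ ν : Measure ℝ) : Measure ℝ :=
  (μ.prod ν).map (fun p => p.1 + p.2)

/-- `n`-fold convolution power of a measure on `ℝ`, with `r^{*0} = δ₀`. -/
noncomputable def convPow (r : Measure ℝ) : ℕ → Measure ℝ
  | 0 => Measure.dirac 0
  | n + 1 => mconv (convPow r n) r

/-- The compound Poisson measure `ρ_{c,r} = e^{-c} ∑_{n} (c^n / n!) r^{*n}`. -/
noncomputable def cPoisson (c : ℝ) (r : Measure ℝ) : Measure ℝ :=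
  Measure.sum (fun n : ℕ =>
    ENNReal.ofReal (Real.exp (-c) * c ^ n / n.factorial) • convPow r n)

lemma measurable_addp : Measurable (fun p : ℝ × ℝ => p.1 + p.2) :=
  measurable_fst.add measurable_snd

instance mconv.instIsProbabilityMeasure (μ ν : Measure ℝ) [IsProbabilityMeasure μ]
    [IsProbabilityMeasure ν] : IsProbabilityMeasure (mconv μ ν) :=
  Measure.isProbabilityMeasure_map measurable_addp.aemeasurable

instance convPow.instIsProbabilityMeasure (r : Measure ℝ) [IsProbabilityMeasure r] (n : ℕ) :
    IsProbabilityMeasure (convPow r n) := by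
  induction n with
  | zero => exact Measure.dirac.isProbabilityMeasure
  | succ n ih => exact mconv.instIsProbabilityMeasure _ _

/-- Integral against a convolution. -/
lemma integral_mconv {μ ν : Measure ℝ} [IsProbabilityMeasure μ] [IsProbabilityMeasure ν]
    {f : ℝ → ℝ} (hf : Continuous f) {B : ℝ} (hB : ∀ x, |f x| ≤ B) :
    ∫ z, f z ∂(mconv μ ν) = ∫ x, ∫ y, f (x + y) ∂ν ∂μ := by
  have hc2 : Continuous (fun p : ℝ × ℝ => f (p.1 + p.2)) :=
    hf.comp (continuous_fst.add continuous_snd)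
  rw [mconv, integral_map measurable_addp.aemeasurable hf.aestronglyMeasurable]
  exact integral_prod _ <| (integrable_const B).mono' hc2.aestronglyMeasurable
    (Filter.Eventually.of_forall fun p => by
      simpa [Real.norm_eq_abs] using hB (p.1 + p.2))

/-- Support of convolution. -/
lemma mconv_compl_Icc {μ ν : Measure ℝ} [SFinite ν] {a b : ℝ}
    (hμ : μ (Set.Icc (-a) a)ᶜ = 0) (hν : ν (Set.Icc (-b) b)ᶜ = 0) :
    mconv μ ν (Set.Icc (-(a + b)) (a + b))ᶜ = 0 := by
  rw [mconv, Measure.map_apply measurable_addp (measurableSet_Icc.compl)]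
  refine measure_mono_null (t := ((Set.Icc (-a) a)ᶜ ×ˢ (Set.univ : Set ℝ)) ∪ ((Set.univ : Set ℝ) ×ˢ (Set.Icc (-b) b)ᶜ)) (fun p hp => ?_) ?_
  · by_contra hcon
    simp only [Set.mem_union, Set.mem_prod, Set.mem_univ, and_true, true_and,
      Set.mem_compl_iff, not_or, not_not] at hcon
    obtain ⟨h1, h2⟩ := hcon
    simp only [Set.mem_preimage, Set.mem_compl_iff, Set.mem_Icc, not_and_or, not_le] at hp
    rcases hp with h | h
    · linarith [h1.1, h2.1]
    · linarith [h1.2, h2.2]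
  · refine measure_union_null ?_ ?_
    · rw [Measure.prod_prod, hμ, zero_mul]
    · rw [Measure.prod_prod, hν, mul_zero]

lemma convPow_compl_Icc {r : Measure ℝ} [SFinite r] {C : ℝ} (_hC : 0 ≤ C)
    (hr : r (Set.Icc (-C) C)ᶜ = 0) (n : ℕ) :
    convPow r n (Set.Icc (-(n * C)) (n * C))ᶜ = 0 := by
  induction n with
  | zero =>
    rw [convPow]
    rw [Measure.dirac_apply' _ measurableSet_Icc.compl]
    simp
  | succ n ih =>
    have : ((n + 1 : ℕ) : ℝ) * C = n * C + C := by push_cast; ring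
    rw [convPow, this]
    exact mconv_compl_Icc ih hr

noncomputable def pw (c : ℝ) (n : ℕ) : ℝ := Real.exp (-c) * c ^ n / n.factorial

lemma pw_nonneg {c : ℝ} (hc : 0 ≤ c) (n : ℕ) : 0 ≤ pw c n := by
  unfold pw; positivity

lemma pw_hasSum {c : ℝ} (hc : 0 < c) : HasSum (pw c) 1 := by
  have h := ProbabilityTheory.poissonPMFRealSum c.toNNReal
  show HasSum (fun n : ℕ => Real.exp (-c) * c ^ n / n.factorial) 1
  simpa [ProbabilityTheory.poissonPMFReal, pw, Real.coe_toNNReal c hc.le] using h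

lemma pw_exp_hasSum {c : ℝ} (hc : 0 < c) (a : ℝ) :
    HasSum (fun n => pw c n * Real.exp (a * n))
      (Real.exp (c * Real.exp a - c)) := by
  set c' : ℝ := c * Real.exp a with hc'
  have hc'pos : 0 < c' := mul_pos hc (Real.exp_pos a)
  have h := (pw_hasSum hc'pos).mul_left (Real.exp (c' - c))
  rw [mul_one] at h
  convert h using 2 with n
  · rfl
  unfold pw
  rw [hc', mul_pow, ← Real.exp_nat_mul, mul_comm a (n:ℝ),
    show (-c) = (c * Real.exp a - c) + (-(c * Real.exp a)) by ring, Real.exp_add]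
  ring

lemma cPoisson_apply_univ {c : ℝ} (hc : 0 < c) (r : Measure ℝ) [IsProbabilityMeasure r] :
    cPoisson c r Set.univ = 1 := by
  have := fun n => convPow.instIsProbabilityMeasure r n
  rw [cPoisson, Measure.sum_apply _ MeasurableSet.univ]
  simp only [Measure.smul_apply, measure_univ, smul_eq_mul, mul_one]
  rw [show (fun n : ℕ => ENNReal.ofReal (Real.exp (-c) * c ^ n / n.factorial))
      = fun n => ENNReal.ofReal (pw c n) from rfl]
  rw [← ENNReal.ofReal_tsum_of_nonneg (pw_nonneg hc.le) (pw_hasSum hc).summable,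
    (pw_hasSum hc).tsum_eq, ENNReal.ofReal_one]

lemma cPoisson_isProbabilityMeasure {c : ℝ} (hc : 0 < c) (r : Measure ℝ)
    [IsProbabilityMeasure r] : IsProbabilityMeasure (cPoisson c r) :=
  ⟨cPoisson_apply_univ hc r⟩

lemma lintegral_cPoisson {c : ℝ} (r : Measure ℝ) (f : ℝ → ENNReal) :
    ∫⁻ x, f x ∂(cPoisson c r) = ∑' n, ENNReal.ofReal (pw c n) * ∫⁻ x, f x ∂(convPow r n) := by
  rw [cPoisson, lintegral_sum_measure]
  congr 1 with n
  rw [lintegral_smul_measure]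
  rfl

lemma lintegral_exp_abs_le_of_compl_Icc {μ : Measure ℝ} [IsProbabilityMeasure μ] {a θ : ℝ}
    (hθ : 0 ≤ θ) (hμ : μ (Set.Icc (-a) a)ᶜ = 0) :
    ∫⁻ x, ENNReal.ofReal (Real.exp (θ * |x|)) ∂μ ≤ ENNReal.ofReal (Real.exp (θ * a)) := by
  calc ∫⁻ x, ENNReal.ofReal (Real.exp (θ * |x|)) ∂μ
      ≤ ∫⁻ _, ENNReal.ofReal (Real.exp (θ * a)) ∂μ := by
        refine lintegral_mono_ae ?_
        rw [ae_iff]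
        refine measure_mono_null (fun x hx => ?_) hμ
        simp only [Set.mem_setOf_eq, not_le] at hx
        simp only [Set.mem_compl_iff, Set.mem_Icc, not_and_or, not_le]
        by_contra hcon
        push_neg at hcon
        have : |x| ≤ a := abs_le.mpr ⟨hcon.1, hcon.2⟩
        exact absurd (ENNReal.ofReal_le_ofReal (Real.exp_le_exp.mpr
          (mul_le_mul_of_nonneg_left this hθ))) (not_le.mpr hx)
    _ = ENNReal.ofReal (Real.exp (θ * a)) := by simp

lemma cPoisson_exp_moment_le {c : ℝ} (hc : 0 < c) {C θ : ℝ} (hC : 0 ≤ C) (hθ : 0 ≤ θ)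
    {r : Measure ℝ} [IsProbabilityMeasure r] (hr : r (Set.Icc (-C) C)ᶜ = 0) :
    ∫⁻ x, ENNReal.ofReal (Real.exp (θ * |x|)) ∂(cPoisson c r)
      ≤ ENNReal.ofReal (Real.exp (c * Real.exp (θ * C))) := by
  rw [lintegral_cPoisson]
  have key : ∀ n : ℕ, ENNReal.ofReal (pw c n) * ∫⁻ x, ENNReal.ofReal (Real.exp (θ * |x|))
      ∂(convPow r n) ≤ ENNReal.ofReal (pw c n * Real.exp ((θ * C) * n)) := by
    intro n
    have := convPow.instIsProbabilityMeasure r n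
    have h1 := lintegral_exp_abs_le_of_compl_Icc (μ := convPow r n) (a := n * C) hθ
      (convPow_compl_Icc hC hr n)
    calc ENNReal.ofReal (pw c n) * ∫⁻ x, ENNReal.ofReal (Real.exp (θ * |x|)) ∂(convPow r n)
        ≤ ENNReal.ofReal (pw c n) * ENNReal.ofReal (Real.exp (θ * (n * C))) :=
          mul_le_mul_right h1 _
      _ = ENNReal.ofReal (pw c n * Real.exp ((θ * C) * n)) := by
          rw [← ENNReal.ofReal_mul (pw_nonneg hc.le n)]; ring_nf
  calc (∑' n, ENNReal.ofReal (pw c n) * ∫⁻ x, ENNReal.ofReal (Real.exp (θ * |x|)) ∂(convPow r n))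
      ≤ ∑' n, ENNReal.ofReal (pw c n * Real.exp ((θ * C) * n)) := ENNReal.tsum_le_tsum key
    _ = ENNReal.ofReal (Real.exp (c * Real.exp (θ * C) - c)) := by
        rw [← ENNReal.ofReal_tsum_of_nonneg
          (fun n => mul_nonneg (pw_nonneg hc.le n) (Real.exp_nonneg _))
          (pw_exp_hasSum hc (θ * C)).summable, (pw_exp_hasSum hc (θ * C)).tsum_eq]
    _ ≤ ENNReal.ofReal (Real.exp (c * Real.exp (θ * C))) := by
        refine ENNReal.ofReal_le_ofReal (Real.exp_le_exp.mpr ?_)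
        linarith

lemma integrable_bdd {ν : Measure ℝ} [IsFiniteMeasure ν] {g : ℝ → ℝ} (hg : Continuous g)
    {B : ℝ} (hB : ∀ x, |g x| ≤ B) : Integrable g ν :=
  (integrable_const B).mono' hg.aestronglyMeasurable
    (Filter.Eventually.of_forall fun x => by simpa [Real.norm_eq_abs] using hB x)

lemma abs_integral_le {ν : Measure ℝ} [IsProbabilityMeasure ν] {g : ℝ → ℝ}
    {B : ℝ} (hB : ∀ x, |g x| ≤ B) : |∫ x, g x ∂ν| ≤ B := by
  have h := norm_integral_le_of_norm_le_const (μ := ν) (f := g) (C := B)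
    (Filter.Eventually.of_forall fun x => by simpa [Real.norm_eq_abs] using hB x)
  simpa [Real.norm_eq_abs, measure_univ] using h

/-- shift integrals are uniformly close when shifts are close. -/
lemma integral_shift_close {ν : Measure ℝ} [IsProbabilityMeasure ν] {f : ℝ → ℝ}
    (hfc : Continuous f) {B : ℝ} (hB : ∀ x, |f x| ≤ B) {δ η : ℝ}
    (hmod : ∀ u v : ℝ, |u - v| ≤ η → |f u - f v| ≤ δ) {x x' : ℝ} (hxx : |x - x'| ≤ η) :
    |(∫ y, f (x + y) ∂ν) - ∫ y, f (x' + y) ∂ν| ≤ δ := by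
  have h1 : Integrable (fun y => f (x + y)) ν :=
    integrable_bdd (hfc.comp (continuous_const.add continuous_id)) (fun y => hB (x + y))
  have h2 : Integrable (fun y => f (x' + y)) ν :=
    integrable_bdd (hfc.comp (continuous_const.add continuous_id)) (fun y => hB (x' + y))
  rw [← integral_sub h1 h2]
  exact abs_integral_le (fun y => hmod _ _ (by simpa using hxx))

lemma uc_shift_integral {ν : Measure ℝ} [IsProbabilityMeasure ν] {f : ℝ → ℝ}
    (hf : UniformContinuous f) {B : ℝ} (hB : ∀ x, |f x| ≤ B) :
    UniformContinuous (fun x => ∫ y, f (x + y) ∂ν) ∧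
      (∀ x, |∫ y, f (x + y) ∂ν| ≤ B) := by
  constructor
  · rw [Metric.uniformContinuous_iff]
    intro δ hδ
    obtain ⟨η, hη, hmod⟩ := Metric.uniformContinuous_iff.mp hf (δ/2) (by linarith)
    refine ⟨η/2, by linarith, fun {x x'} hxx => ?_⟩
    have key : |(∫ y, f (x + y) ∂ν) - ∫ y, f (x' + y) ∂ν| ≤ δ/2 := by
      refine integral_shift_close hf.continuous hB (η := η/2) ?_ ?_
      · intro u v huv
        have : dist u v < η := lt_of_le_of_lt (by simpa [Real.dist_eq] using huv) (by linarith)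
        exact le_of_lt (by simpa [Real.dist_eq] using hmod this)
      · simpa [Real.dist_eq] using hxx.le
    calc dist (∫ y, f (x + y) ∂ν) (∫ y, f (x' + y) ∂ν) ≤ δ/2 := by
          simpa [Real.dist_eq] using key
      _ < δ := by linarith
  · exact fun x => abs_integral_le (fun y => hB _)

lemma convPow_integral_tendsto {C : ℝ} (hC : 0 < C) {rε : ℝ → Measure ℝ} {r : Measure ℝ}
    (hprobε : ∀ ε ∈ Set.Ioc (0 : ℝ) 1, IsProbabilityMeasure (rε ε))
    (hprob : IsProbabilityMeasure r)
    (hsuppε : ∀ ε ∈ Set.Ioc (0 : ℝ) 1, rε ε (Set.Icc (-C) C)ᶜ = 0)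
    (hsupp : r (Set.Icc (-C) C)ᶜ = 0)
    (hweak : ∀ f : BoundedContinuousFunction ℝ ℝ,
      Filter.Tendsto (fun ε => ∫ x, f x ∂(rε ε)) (nhdsWithin 0 (Set.Ioc 0 1))
        (nhds (∫ x, f x ∂r)))
    (n : ℕ) :
    ∀ (f : ℝ → ℝ), UniformContinuous f → ∀ B : ℝ, (∀ x, |f x| ≤ B) →
    Tendsto (fun ε => ∫ x, f x ∂(convPow (rε ε) n)) (nhdsWithin 0 (Set.Ioc 0 1))
      (nhds (∫ x, f x ∂(convPow r n))) := by
  haveI := hprob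
  induction n with
  | zero =>
    intro f hf B hB
    simp only [convPow, integral_dirac' f 0 hf.continuous.stronglyMeasurable]
    exact tendsto_const_nhds
  | succ n ih =>
    intro f hf B hB
    set G : ℝ → ℝ := fun x => ∫ y, f (x + y) ∂r with hG
    obtain ⟨hGuc, hGB⟩ := uc_shift_integral (ν := r) hf hB
    have hIH := ih G hGuc B hGB
    rw [Metric.tendsto_nhds]
    intro δ hδ
    -- modulus
    obtain ⟨η, hη, hmod0⟩ := Metric.uniformContinuous_iff.mp hf (δ/8) (by linarith)
    have hmod : ∀ u v : ℝ, |u - v| ≤ η/2 → |f u - f v| ≤ δ/8 := by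
      intro u v huv
      have : dist u v < η := lt_of_le_of_lt (by simpa [Real.dist_eq] using huv) (by linarith)
      exact le_of_lt (by simpa [Real.dist_eq] using hmod0 this)
    -- finite net on the support interval
    set T : Set ℝ := Set.Icc (-(n * C)) (n * C) with hT
    obtain ⟨t, ht⟩ := (isCompact_Icc (a := -(n * C)) (b := n * C)).elim_finite_subcover
      (fun i : ℝ => Metric.ball i (η/2)) (fun i => Metric.isOpen_ball)
      (fun x hx => Set.mem_iUnion.mpr ⟨x, Metric.mem_ball_self (by linarith)⟩)
    -- pointwise convergence at net points
    have hnet : ∀ᶠ ε in nhdsWithin 0 (Set.Ioc 0 1), ∀ i ∈ t,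
        |(∫ y, f (i + y) ∂(rε ε)) - ∫ y, f (i + y) ∂r| ≤ δ/8 := by
      rw [eventually_all_finset]
      intro i _
      have hcont : Continuous (fun y => f (i + y)) :=
        hf.continuous.comp (continuous_const.add continuous_id)
      have hBnn : 0 ≤ B := le_trans (abs_nonneg _) (hB 0)
      set g : BoundedContinuousFunction ℝ ℝ :=
        BoundedContinuousFunction.ofNormedAddCommGroup (fun y => f (i + y)) hcont B
          (fun y => by simpa [Real.norm_eq_abs] using hB (i + y)) with hg
      have := hweak g
      simp only [hg, BoundedContinuousFunction.coe_ofNormedAddCommGroup] at this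
      have h2 := (Metric.tendsto_nhds.mp this) (δ/8) (by linarith)
      filter_upwards [h2] with ε hε
      exact le_of_lt (by simpa [Real.dist_eq] using hε)
    have hIH' := (Metric.tendsto_nhds.mp hIH) (δ/4) (by linarith)
    filter_upwards [self_mem_nhdsWithin, hnet, hIH'] with ε hεIoc hnetε hIHε
    haveI hpε : IsProbabilityMeasure (rε ε) := hprobε ε hεIoc
    set Gε : ℝ → ℝ := fun x => ∫ y, f (x + y) ∂(rε ε) with hGε
    obtain ⟨hGεuc, hGεB⟩ := uc_shift_integral (ν := rε ε) hf hB
    -- Claim A : on T, Gε is close to G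
    have claimA : ∀ x ∈ T, |Gε x - G x| ≤ 3*δ/8 := by
      intro x hx
      obtain ⟨i, hit, hxi⟩ := by
        have := ht hx
        simpa only [Set.mem_iUnion, exists_prop] using this
      have hxi' : |x - i| ≤ η/2 := le_of_lt (by simpa [Real.dist_eq] using hxi)
      have h1 : |Gε x - Gε i| ≤ δ/8 :=
        integral_shift_close hf.continuous hB (δ := δ/8) hmod hxi'
      have h2 : |G x - G i| ≤ δ/8 :=
        integral_shift_close hf.continuous hB (δ := δ/8) hmod hxi'
      have h3 : |Gε i - G i| ≤ δ/8 := hnetε i hit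
      calc |Gε x - G x| = |(Gε x - Gε i) + (Gε i - G i) + (G i - G x)| := by ring_nf
        _ ≤ |(Gε x - Gε i) + (Gε i - G i)| + |G i - G x| := abs_add_le _ _
        _ ≤ |Gε x - Gε i| + |Gε i - G i| + |G i - G x| := by
            exact add_le_add_left (abs_add_le _ _) _
        _ ≤ δ/8 + δ/8 + δ/8 := by
            refine add_le_add (add_le_add h1 h3) ?_
            rw [abs_sub_comm]; exact h2
        _ = 3*δ/8 := by ring
    -- the two integral identities
    have hid1 : ∫ x, f x ∂(convPow (rε ε) (n+1)) = ∫ x, Gε x ∂(convPow (rε ε) n) := by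
      rw [show convPow (rε ε) (n+1) = mconv (convPow (rε ε) n) (rε ε) from rfl]
      exact integral_mconv hf.continuous hB
    have hid2 : ∫ x, f x ∂(convPow r (n+1)) = ∫ x, G x ∂(convPow r n) := by
      rw [show convPow r (n+1) = mconv (convPow r n) r from rfl]
      exact integral_mconv hf.continuous hB
    -- Claim B
    have hGint : Integrable G (convPow (rε ε) n) := integrable_bdd hGuc.continuous hGB
    have hGεint : Integrable Gε (convPow (rε ε) n) := integrable_bdd hGεuc.continuous hGεB
    have hsuppμε : (convPow (rε ε) n) Tᶜ = 0 := convPow_compl_Icc hC.le (hsuppε ε hεIoc) n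
    have claimB : |(∫ x, Gε x ∂(convPow (rε ε) n)) - ∫ x, G x ∂(convPow (rε ε) n)|
        ≤ 3*δ/8 := by
      rw [← integral_sub hGεint hGint]
      have hae : ∀ᵐ x ∂(convPow (rε ε) n), ‖Gε x - G x‖ ≤ 3*δ/8 := by
        rw [ae_iff]
        refine measure_mono_null (fun x hx => ?_) hsuppμε
        simp only [Set.mem_setOf_eq, Real.norm_eq_abs, not_le] at hx
        intro hxT
        exact absurd (claimA x hxT) (not_le.mpr hx)
      have := norm_integral_le_of_norm_le_const (μ := convPow (rε ε) n)
        (f := fun x => Gε x - G x) hae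
      simpa [Real.norm_eq_abs, measure_univ] using this
    -- conclude
    rw [Real.dist_eq, hid1, hid2]
    have : |(∫ x, Gε x ∂(convPow (rε ε) n)) - ∫ x, G x ∂(convPow r n)|
        ≤ 3*δ/8 + δ/4 := by
      calc |(∫ x, Gε x ∂(convPow (rε ε) n)) - ∫ x, G x ∂(convPow r n)|
          = |((∫ x, Gε x ∂(convPow (rε ε) n)) - ∫ x, G x ∂(convPow (rε ε) n))
            + ((∫ x, G x ∂(convPow (rε ε) n)) - ∫ x, G x ∂(convPow r n))| := by ring_nf
        _ ≤ _ + _ := abs_add_le _ _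
        _ ≤ 3*δ/8 + δ/4 := add_le_add claimB (le_of_lt (by
            simpa [Real.dist_eq] using hIHε))
    exact lt_of_le_of_lt this (by linarith)

/-- Bochner integral of a bounded continuous function against the compound Poisson measure. -/
lemma integral_cPoisson {c : ℝ} (hc : 0 < c) {r : Measure ℝ} [IsProbabilityMeasure r]
    {f : ℝ → ℝ} (hfc : Continuous f) {B : ℝ} (hB : ∀ x, |f x| ≤ B) :
    ∫ x, f x ∂(cPoisson c r) = ∑' n, pw c n * ∫ x, f x ∂(convPow r n) := by
  haveI := cPoisson_isProbabilityMeasure hc r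
  have hint : Integrable f (cPoisson c r) := integrable_bdd hfc hB
  rw [cPoisson] at hint ⊢
  rw [integral_sum_measure hint]
  congr 1 with n
  rw [integral_smul_measure]
  have h0 : (0:ℝ) ≤ Real.exp (-c) * c ^ n / n.factorial := by positivity
  rw [ENNReal.toReal_ofReal h0]
  rfl

lemma cPoisson_integral_tendsto {C : ℝ} (hC : 0 < C) {c : ℝ} (hc : 0 < c)
    {rε : ℝ → Measure ℝ} {r : Measure ℝ}
    (hprobε : ∀ ε ∈ Set.Ioc (0 : ℝ) 1, IsProbabilityMeasure (rε ε))
    (hprob : IsProbabilityMeasure r)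
    (hsuppε : ∀ ε ∈ Set.Ioc (0 : ℝ) 1, rε ε (Set.Icc (-C) C)ᶜ = 0)
    (hsupp : r (Set.Icc (-C) C)ᶜ = 0)
    (hweak : ∀ f : BoundedContinuousFunction ℝ ℝ,
      Filter.Tendsto (fun ε => ∫ x, f x ∂(rε ε)) (nhdsWithin 0 (Set.Ioc 0 1))
        (nhds (∫ x, f x ∂r)))
    (f : ℝ → ℝ) (hf : UniformContinuous f) (B : ℝ) (hB : ∀ x, |f x| ≤ B) :
    Tendsto (fun ε => ∫ x, f x ∂(cPoisson c (rε ε))) (nhdsWithin 0 (Set.Ioc 0 1))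
      (nhds (∫ x, f x ∂(cPoisson c r))) := by
  haveI := hprob
  have hBnn : 0 ≤ B := le_trans (abs_nonneg _) (hB 0)
  have hlim : Tendsto (fun ε => ∑' n, pw c n * ∫ x, f x ∂(convPow (rε ε) n))
      (nhdsWithin 0 (Set.Ioc 0 1)) (nhds (∑' n, pw c n * ∫ x, f x ∂(convPow r n))) := by
    refine tendsto_tsum_of_dominated_convergence
      (bound := fun n => pw c n * B) ((pw_hasSum hc).summable.mul_right B) (fun n => ?_) ?_
    · exact ((convPow_integral_tendsto hC hprobε hprob hsuppε hsupp hweak n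
        f hf B hB).const_mul _)
    · filter_upwards [self_mem_nhdsWithin] with ε hε
      intro n
      haveI := hprobε ε hε
      rw [Real.norm_eq_abs, abs_mul, abs_of_nonneg (pw_nonneg hc.le n)]
      exact mul_le_mul_of_nonneg_left (abs_integral_le hB) (pw_nonneg hc.le n)
  have heq : ∀ᶠ ε in nhdsWithin (0:ℝ) (Set.Ioc 0 1),
      (∑' n, pw c n * ∫ x, f x ∂(convPow (rε ε) n)) = ∫ x, f x ∂(cPoisson c (rε ε)) := by
    filter_upwards [self_mem_nhdsWithin] with ε hε
    haveI := hprobε ε hε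
    exact (integral_cPoisson hc hf.continuous hB).symm
  have hfin : (∑' n, pw c n * ∫ x, f x ∂(convPow r n)) = ∫ x, f x ∂(cPoisson c r) :=
    (integral_cPoisson hc hf.continuous hB).symm
  rw [← hfin]
  exact Tendsto.congr' heq hlim

section Helpers

variable {α : Type*} [MeasurableSpace α] [TopologicalSpace α] [OpensMeasurableSpace α]

lemma integrable_bdd2 {ν : Measure α} [IsFiniteMeasure ν] {g : α → ℝ} (hg : Continuous g)
    {B : ℝ} (hB : ∀ x, |g x| ≤ B) : Integrable g ν :=
  (integrable_const B).mono' hg.aestronglyMeasurable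
    (Filter.Eventually.of_forall fun x => by simpa [Real.norm_eq_abs] using hB x)

lemma abs_integral_le2 {ν : Measure α} [IsProbabilityMeasure ν] {g : α → ℝ}
    {B : ℝ} (hB : ∀ x, |g x| ≤ B) : |∫ x, g x ∂ν| ≤ B := by
  have h := norm_integral_le_of_norm_le_const (μ := ν) (f := g) (C := B)
    (Filter.Eventually.of_forall fun x => by simpa [Real.norm_eq_abs] using hB x)
  simpa [Real.norm_eq_abs, measure_univ] using h

end Helpers

lemma dist_cons_cons {k : ℕ} (x x' : ℝ) (y : Fin k → ℝ) :
    dist (Fin.cons x y : Fin (k+1) → ℝ) (Fin.cons x' y) ≤ dist x x' := by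
  rw [dist_pi_le_iff dist_nonneg]
  intro i
  refine Fin.cases ?_ (fun j => ?_) i
  · simp
  · simp [dist_nonneg]

lemma continuous_cons_fst {k : ℕ} (h : (Fin (k+1) → ℝ) → ℝ) (hh : Continuous h) :
    Continuous (fun p : ℝ × (Fin k → ℝ) => h (Fin.cons p.1 p.2)) := by
  refine hh.comp <| continuous_pi fun i => ?_
  refine Fin.cases ?_ (fun j => ?_) i
  · simpa using continuous_fst
  · exact ((continuous_apply j).comp continuous_snd : Continuous fun a : ℝ × (Fin k → ℝ) => a.2 j)

/-- Splitting of the integral against a finite product measure. -/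
lemma integral_pi_succ {k : ℕ} (μ : Measure ℝ) [IsProbabilityMeasure μ]
    (h : (Fin (k+1) → ℝ) → ℝ) (hh : Continuous h) {B : ℝ} (hB : ∀ x, |h x| ≤ B) :
    ∫ s, h s ∂(Measure.pi fun _ : Fin (k+1) => μ)
      = ∫ x, ∫ y, h (Fin.cons x y) ∂(Measure.pi fun _ : Fin k => μ) ∂μ := by
  have hmp := (measurePreserving_piFinSuccAbove (fun _ : Fin (k+1) => (μ : Measure ℝ)) 0).symm
  have h1 : ∫ p : ℝ × (Fin k → ℝ), h (Fin.cons p.1 p.2)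
        ∂(μ.prod (Measure.pi fun _ : Fin k => μ))
      = ∫ s, h s ∂(Measure.pi fun _ : Fin (k+1) => μ) := by
    have := hmp.integral_comp' (f := (MeasurableEquiv.piFinSuccAbove (fun _ : Fin (k+1) => ℝ) 0).symm) h
    rw [← this]
    congr 1 with p
    congr 1
    simp [MeasurableEquiv.piFinSuccAbove, Fin.insertNthEquiv, Fin.insertNth_zero']
  rw [← h1]
  exact integral_prod _ (integrable_bdd2 (continuous_cons_fst h hh)
    (fun p => hB _))

lemma uc_cons_integral {k : ℕ} {h : (Fin (k+1) → ℝ) → ℝ} (huc : UniformContinuous h)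
    {B : ℝ} (hB : ∀ x, |h x| ≤ B) (ν : Measure (Fin k → ℝ)) [IsProbabilityMeasure ν] :
    UniformContinuous (fun x : ℝ => ∫ y, h (Fin.cons x y) ∂ν) := by
  have hinner_cont : ∀ (x : ℝ), Continuous (fun y : Fin k → ℝ => h (Fin.cons x y)) :=
    fun x => huc.continuous.comp (continuous_pi fun i => by
      refine Fin.cases ?_ (fun j => ?_) i
      · simpa using continuous_const
      · simpa using continuous_apply j)
  rw [Metric.uniformContinuous_iff]
  intro δ hδ
  obtain ⟨η, hη, hmod0⟩ := Metric.uniformContinuous_iff.mp huc (δ/2) (by linarith)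
  refine ⟨η, hη, fun {x x'} hxx => ?_⟩
  have key : |(∫ y, h (Fin.cons x y) ∂ν) - ∫ y, h (Fin.cons x' y) ∂ν| ≤ δ/2 := by
    rw [← integral_sub (integrable_bdd2 (hinner_cont x) (fun y => hB _))
      (integrable_bdd2 (hinner_cont x') (fun y => hB _))]
    refine abs_integral_le2 (fun y => ?_)
    have hd : dist (Fin.cons x y : Fin (k+1) → ℝ) (Fin.cons x' y) < η :=
      lt_of_le_of_lt (dist_cons_cons x x' y) hxx
    exact le_of_lt (by simpa [Real.dist_eq] using hmod0 hd)
  rw [Real.dist_eq]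
  exact lt_of_le_of_lt key (by linarith)

lemma pi_cPoisson_integral_tendsto {C : ℝ} (hC : 0 < C) {c : ℝ} (hc : 0 < c)
    {rε : ℝ → Measure ℝ} {r : Measure ℝ}
    (hprobε : ∀ ε ∈ Set.Ioc (0 : ℝ) 1, IsProbabilityMeasure (rε ε))
    (hprob : IsProbabilityMeasure r)
    (hsuppε : ∀ ε ∈ Set.Ioc (0 : ℝ) 1, rε ε (Set.Icc (-C) C)ᶜ = 0)
    (hsupp : r (Set.Icc (-C) C)ᶜ = 0)
    (hweak : ∀ f : BoundedContinuousFunction ℝ ℝ,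
      Filter.Tendsto (fun ε => ∫ x, f x ∂(rε ε)) (nhdsWithin 0 (Set.Ioc 0 1))
        (nhds (∫ x, f x ∂r)))
    (k : ℕ) :
    ∀ (h : (Fin k → ℝ) → ℝ), Continuous h → HasCompactSupport h →
    Tendsto (fun ε => ∫ s, h s ∂(Measure.pi fun _ : Fin k => cPoisson c (rε ε)))
      (nhdsWithin 0 (Set.Ioc 0 1))
      (nhds (∫ s, h s ∂(Measure.pi fun _ : Fin k => cPoisson c r))) := by
  haveI := hprob
  haveI := cPoisson_isProbabilityMeasure hc r
  induction k with
  | zero =>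
    intro h hh hcs
    have heq : ∀ (ν : Measure ℝ),
        ∫ s, h s ∂(Measure.pi fun _ : Fin 0 => ν) = h isEmptyElim := by
      intro ν
      rw [Measure.pi_of_empty (fun _ : Fin 0 => ν)]
      exact integral_dirac' h _ hh.stronglyMeasurable
    simp only [heq]
    exact tendsto_const_nhds
  | succ k ih =>
    intro h hh hcs
    obtain ⟨B, hB⟩ := hh.bounded_above_of_compact_support hcs
    simp only [Real.norm_eq_abs] at hB
    -- uniform continuity of h
    have huc : UniformContinuous h := hcs.uniformContinuous_of_continuous hh
    -- limit inner function
    set F : ℝ → ℝ := fun x => ∫ y, h (Fin.cons x y) ∂(Measure.pi fun _ : Fin k => cPoisson c r)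
      with hF
    have hinner_cont : ∀ (x : ℝ), Continuous (fun y : Fin k → ℝ => h (Fin.cons x y)) :=
      fun x => hh.comp (continuous_pi fun i => by
        refine Fin.cases ?_ (fun j => ?_) i
        · simpa using continuous_const
        · simpa using continuous_apply j)
    have hinner_cs : ∀ (x : ℝ), HasCompactSupport (fun y : Fin k → ℝ => h (Fin.cons x y)) := by
      intro x
      refine HasCompactSupport.intro (K := (fun z : Fin (k+1) → ℝ => Fin.tail z) '' tsupport h)
        (hcs.image (continuous_pi fun j => continuous_apply j.succ)) ?_
      intro y hy
      by_contra h0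
      exact hy ⟨Fin.cons x y, subset_tsupport _ h0, by simp [Fin.tail_cons]⟩
    -- modulus for shifted integrals
    have hmodgen : ∀ {δ η : ℝ}, 0 ≤ δ →
        (∀ u v : Fin (k+1) → ℝ, dist u v ≤ η → |h u - h v| ≤ δ) →
        ∀ (ν : Measure (Fin k → ℝ)), IsProbabilityMeasure ν →
        ∀ x x' : ℝ, dist x x' ≤ η →
        |(∫ y, h (Fin.cons x y) ∂ν) - ∫ y, h (Fin.cons x' y) ∂ν| ≤ δ := by
      intro δ η hδ hmod ν hν x x' hxx
      haveI := hν
      rw [← integral_sub (integrable_bdd2 (hinner_cont x) (fun y => hB _))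
        (integrable_bdd2 (hinner_cont x') (fun y => hB _))]
      exact abs_integral_le2 (fun y => hmod _ _ (le_trans (dist_cons_cons x x' y) hxx))
    -- F is uniformly continuous and bounded
    have hFB : ∀ x, |F x| ≤ B := fun x => abs_integral_le2 (fun y => hB _)
    have hFuc : UniformContinuous F := uc_cons_integral huc hB _
    -- outer convergence from the single-coordinate result
    have hout := cPoisson_integral_tendsto hC hc hprobε hprob hsuppε hsupp hweak F hFuc B hFB
    rw [Metric.tendsto_nhds]
    intro δ hδ
    -- net on the compact set A of relevant x values
    obtain ⟨η, hη, hmod0⟩ := Metric.uniformContinuous_iff.mp huc (δ/8) (by linarith)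
    have hmod : ∀ u v : Fin (k+1) → ℝ, dist u v ≤ η/2 → |h u - h v| ≤ δ/8 :=
      fun u v huv => le_of_lt (by
        simpa [Real.dist_eq] using hmod0 (lt_of_le_of_lt huv (by linarith)))
    set A : Set ℝ := (fun z : Fin (k+1) → ℝ => z 0) '' tsupport h with hA
    have hAcomp : IsCompact A := hcs.image (continuous_apply 0)
    have hvanish : ∀ x ∉ A, ∀ y : Fin k → ℝ, h (Fin.cons x y) = 0 := by
      intro x hx y
      by_contra h0
      exact hx ⟨Fin.cons x y, subset_tsupport _ h0, by simp⟩
    obtain ⟨t, ht⟩ := hAcomp.elim_finite_subcover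
      (fun i : ℝ => Metric.ball i (η/2)) (fun i => Metric.isOpen_ball)
      (fun x hx => Set.mem_iUnion.mpr ⟨x, Metric.mem_ball_self (by linarith)⟩)
    -- pointwise convergence at net points via induction hypothesis
    have hnet : ∀ᶠ ε in nhdsWithin (0:ℝ) (Set.Ioc 0 1), ∀ i ∈ t,
        |(∫ y, h (Fin.cons i y) ∂(Measure.pi fun _ : Fin k => cPoisson c (rε ε)))
          - ∫ y, h (Fin.cons i y) ∂(Measure.pi fun _ : Fin k => cPoisson c r)| ≤ δ/8 := by
      rw [eventually_all_finset]
      intro i _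
      have h2 := (Metric.tendsto_nhds.mp (ih _ (hinner_cont i) (hinner_cs i))) (δ/8)
        (by linarith)
      filter_upwards [h2] with ε hε
      exact le_of_lt (by simpa [Real.dist_eq] using hε)
    have hout' := (Metric.tendsto_nhds.mp hout) (δ/4) (by linarith)
    filter_upwards [self_mem_nhdsWithin, hnet, hout'] with ε hεIoc hnetε houtε
    haveI := hprobε ε hεIoc
    haveI := cPoisson_isProbabilityMeasure hc (rε ε)
    set Fε : ℝ → ℝ :=
      fun x => ∫ y, h (Fin.cons x y) ∂(Measure.pi fun _ : Fin k => cPoisson c (rε ε)) with hFε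
    have hFεB : ∀ x, |Fε x| ≤ B := fun x => abs_integral_le2 (fun y => hB _)
    -- claim A : Fε close to F everywhere
    have claimA : ∀ x : ℝ, |Fε x - F x| ≤ 3*δ/8 := by
      intro x
      by_cases hxA : x ∈ A
      · obtain ⟨i, hit, hxi⟩ := by
          have := ht hxA
          simpa only [Set.mem_iUnion, exists_prop] using this
        have hxi' : dist x i ≤ η/2 := le_of_lt hxi
        have h1 : |Fε x - Fε i| ≤ δ/8 :=
          hmodgen (by linarith) hmod _ inferInstance x i hxi'
        have h2 : |F x - F i| ≤ δ/8 :=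
          hmodgen (by linarith) hmod _ inferInstance x i hxi'
        have h3 : |Fε i - F i| ≤ δ/8 := hnetε i hit
        calc |Fε x - F x| = |(Fε x - Fε i) + (Fε i - F i) + (F i - F x)| := by ring_nf
          _ ≤ |(Fε x - Fε i) + (Fε i - F i)| + |F i - F x| := abs_add_le _ _
          _ ≤ |Fε x - Fε i| + |Fε i - F i| + |F i - F x| := add_le_add_left (abs_add_le _ _) _
          _ ≤ δ/8 + δ/8 + δ/8 := by
              refine add_le_add (add_le_add h1 h3) ?_
              rw [abs_sub_comm]; exact h2
          _ ≤ 3*δ/8 := by linarith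
      · have hz : ∀ (ν : Measure (Fin k → ℝ)),
            (∫ y, h (Fin.cons x y) ∂ν) = 0 := by
          intro ν
          rw [show (fun y : Fin k → ℝ => h (Fin.cons x y)) = fun _ => (0:ℝ) from
            funext fun y => hvanish x hxA y]
          simp
        have hz0 : Fε x = 0 := hz _
        have hz1 : F x = 0 := hz _
        rw [hz0, hz1, sub_zero, abs_zero]
        positivity
    -- integral identities
    have hid1 : ∫ s, h s ∂(Measure.pi fun _ : Fin (k+1) => cPoisson c (rε ε))
        = ∫ x, Fε x ∂(cPoisson c (rε ε)) := integral_pi_succ _ h hh hB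
    have hid2 : ∫ s, h s ∂(Measure.pi fun _ : Fin (k+1) => cPoisson c r)
        = ∫ x, F x ∂(cPoisson c r) := integral_pi_succ _ h hh hB
    -- claim B
    have hFεuc : UniformContinuous Fε := uc_cons_integral huc hB _
    have claimB : |(∫ x, Fε x ∂(cPoisson c (rε ε))) - ∫ x, F x ∂(cPoisson c (rε ε))|
        ≤ 3*δ/8 := by
      rw [← integral_sub (integrable_bdd2 hFεuc.continuous hFεB)
        (integrable_bdd2 hFuc.continuous hFB)]
      exact abs_integral_le2 (fun x => claimA x)
    have hsplit : (∫ x, Fε x ∂(cPoisson c (rε ε))) - ∫ x, F x ∂(cPoisson c r)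
        = ((∫ x, Fε x ∂(cPoisson c (rε ε))) - ∫ x, F x ∂(cPoisson c (rε ε)))
          + ((∫ x, F x ∂(cPoisson c (rε ε))) - ∫ x, F x ∂(cPoisson c r)) := by ring
    have hfinal : |(∫ x, Fε x ∂(cPoisson c (rε ε))) - ∫ x, F x ∂(cPoisson c r)|
        ≤ 3*δ/8 + δ/4 := by
      rw [hsplit]
      refine le_trans (abs_add_le _ _) (add_le_add claimB (le_of_lt ?_))
      simpa [Real.dist_eq] using houtε
    rw [Real.dist_eq, hid1, hid2]
    exact lt_of_le_of_lt hfinal (by linarith)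

/-- Exponential moment bound for the product measure. -/
lemma lintegral_pi_exp_le (k : ℕ) (μ : Measure ℝ) [IsProbabilityMeasure μ] {θ : ℝ}
    (hθ : 0 ≤ θ) {M : ENNReal}
    (hM : ∫⁻ x, ENNReal.ofReal (Real.exp (θ * |x|)) ∂μ ≤ M) :
    ∫⁻ s, ENNReal.ofReal (Real.exp (θ * ∑ i, |s i|)) ∂(Measure.pi fun _ : Fin k => μ)
      ≤ M ^ k := by
  induction k with
  | zero =>
    haveI : IsProbabilityMeasure (Measure.pi fun _ : Fin 0 => μ) := by infer_instance
    have : (fun s : Fin 0 → ℝ => ENNReal.ofReal (Real.exp (θ * ∑ i, |s i|)))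
        = fun _ => (1 : ENNReal) := by
      funext s
      simp
    rw [this, lintegral_const, measure_univ, mul_one, pow_zero]
  | succ k ih =>
    have hmeas : ∀ j : ℕ, Measurable (fun s : Fin j → ℝ =>
        ENNReal.ofReal (Real.exp (θ * ∑ i, |s i|))) := by
      intro j
      refine ENNReal.measurable_ofReal.comp <| (Real.continuous_exp.comp
        (continuous_const.mul (continuous_finset_sum _ fun i _ =>
          (continuous_apply i).abs))).measurable
    have hmp := (measurePreserving_piFinSuccAbove (fun _ : Fin (k+1) => μ) 0).symm
    have hmap : (Measure.pi fun _ : Fin (k+1) => μ)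
        = Measure.map (MeasurableEquiv.piFinSuccAbove (fun _ : Fin (k+1) => ℝ) 0).symm
          (μ.prod (Measure.pi fun _ : Fin k => μ)) := hmp.map_eq.symm
    rw [hmap, lintegral_map (hmeas (k+1))
      (MeasurableEquiv.piFinSuccAbove (fun _ : Fin (k+1) => ℝ) 0).symm.measurable]
    have hsplit : ∀ p : ℝ × (Fin k → ℝ),
        ENNReal.ofReal (Real.exp (θ * ∑ i,
          |((MeasurableEquiv.piFinSuccAbove (fun _ : Fin (k+1) => ℝ) 0).symm p) i|))
        = ENNReal.ofReal (Real.exp (θ * |p.1|))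
          * ENNReal.ofReal (Real.exp (θ * ∑ i, |p.2 i|)) := by
      intro p
      have he : ((MeasurableEquiv.piFinSuccAbove (fun _ : Fin (k+1) => ℝ) 0).symm p)
          = Fin.cons p.1 p.2 := by
        simp [MeasurableEquiv.piFinSuccAbove, Fin.insertNthEquiv, Fin.insertNth_zero']
      rw [he, Fin.sum_univ_succ]
      simp only [Fin.cons_zero, Fin.cons_succ]
      rw [mul_add, Real.exp_add, ENNReal.ofReal_mul (Real.exp_nonneg _)]
    simp only [hsplit]
    have hf1 : AEMeasurable (fun x : ℝ => ENNReal.ofReal (Real.exp (θ * |x|))) μ :=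
      ((ENNReal.measurable_ofReal.comp ((Real.continuous_exp.comp
        (continuous_const.mul continuous_abs)).measurable))).aemeasurable
    rw [lintegral_prod_mul (f := fun x : ℝ => ENNReal.ofReal (Real.exp (θ * |x|)))
      (g := fun s : Fin k → ℝ => ENNReal.ofReal (Real.exp (θ * ∑ i, |s i|)))
      hf1 ((hmeas k).aemeasurable)]
    calc (∫⁻ x, ENNReal.ofReal (Real.exp (θ * |x|)) ∂μ)
          * ∫⁻ s, ENNReal.ofReal (Real.exp (θ * ∑ i, |s i|)) ∂(Measure.pi fun _ : Fin k => μ)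
        ≤ M * M ^ k := mul_le_mul' hM ih
      _ = M ^ (k+1) := (pow_succ' M k).symm

/-- Integrability of an exponentially bounded function against the product measure. -/
lemma integrable_expbound {c : ℝ} (hc : 0 < c) {C : ℝ} (hC : 0 < C) (m : ℕ)
    {r' : Measure ℝ} [IsProbabilityMeasure r'] (hsupp' : r' (Set.Icc (-C) C)ᶜ = 0)
    {H : (Fin m → ℝ) → ℝ} (hH : Continuous H) {K κ : ℝ} (hK : 0 < K) (hκ : 0 < κ)
    (hHb : ∀ s, |H s| ≤ K * Real.exp (κ * ∑ i, |s i|)) :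
    Integrable H (Measure.pi fun _ : Fin m => cPoisson c r') := by
  haveI := cPoisson_isProbabilityMeasure hc r'
  refine ⟨hH.aestronglyMeasurable, ?_⟩
  rw [hasFiniteIntegral_iff_norm]
  calc ∫⁻ s, ENNReal.ofReal ‖H s‖ ∂(Measure.pi fun _ : Fin m => cPoisson c r')
      ≤ ∫⁻ s, ENNReal.ofReal K * ENNReal.ofReal (Real.exp (κ * ∑ i, |s i|))
          ∂(Measure.pi fun _ : Fin m => cPoisson c r') := by
        refine lintegral_mono fun s => ?_
        rw [← ENNReal.ofReal_mul hK.le]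
        exact ENNReal.ofReal_le_ofReal (by simpa [Real.norm_eq_abs] using hHb s)
    _ = ENNReal.ofReal K * ∫⁻ s, ENNReal.ofReal (Real.exp (κ * ∑ i, |s i|))
          ∂(Measure.pi fun _ : Fin m => cPoisson c r') := lintegral_const_mul' _ _ (by simp)
    _ ≤ ENNReal.ofReal K * (ENNReal.ofReal (Real.exp (c * Real.exp (κ * C)))) ^ m := by
        exact mul_le_mul_right (lintegral_pi_exp_le m _ hκ.le
          (cPoisson_exp_moment_le hc hC.le hκ.le hsupp')) _
    _ < ⊤ := by
        refine ENNReal.mul_lt_top ENNReal.ofReal_lt_top ?_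
        exact ENNReal.pow_lt_top ENNReal.ofReal_lt_top

section Cutoff

variable (m : ℕ) (R : ℝ)

noncomputable def cutoff : (Fin m → ℝ) → ℝ := fun s => min 1 (max 0 (R + 1 - ‖s‖))

lemma cutoff_continuous : Continuous (cutoff m R) :=
  (continuous_const.min ((continuous_const.max
    ((continuous_const.sub continuous_norm)))))

lemma cutoff_nonneg (s : Fin m → ℝ) : 0 ≤ cutoff m R s :=
  le_min zero_le_one (le_max_left _ _)

lemma cutoff_le_one (s : Fin m → ℝ) : cutoff m R s ≤ 1 := min_le_left _ _

lemma cutoff_eq_one {s : Fin m → ℝ} (hs : ‖s‖ ≤ R) : cutoff m R s = 1 := by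
  have h1 : (1:ℝ) ≤ R + 1 - ‖s‖ := by linarith
  rw [cutoff, max_eq_right (by linarith), min_eq_left h1]

lemma cutoff_eq_zero {s : Fin m → ℝ} (hs : R + 1 ≤ ‖s‖) : cutoff m R s = 0 := by
  rw [cutoff, max_eq_left (by linarith), min_eq_right zero_le_one]

lemma cutoff_hasCompactSupport : HasCompactSupport (cutoff m R) := by
  refine HasCompactSupport.intro (K := Metric.closedBall 0 (R+1))
    (isCompact_closedBall _ _) (fun s hs => ?_)
  rw [Metric.mem_closedBall, dist_zero_right, not_le] at hs
  exact cutoff_eq_zero m R hs.le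

end Cutoff

lemma norm_le_sum_abs {m : ℕ} (s : Fin m → ℝ) : ‖s‖ ≤ ∑ i, |s i| := by
  refine pi_norm_le_iff_of_nonneg (Finset.sum_nonneg fun i _ => abs_nonneg _) |>.mpr fun i => ?_
  rw [Real.norm_eq_abs]
  exact Finset.single_le_sum (fun j _ => abs_nonneg (s j)) (Finset.mem_univ i)

/-- pointwise truncation error bound -/
lemma trunc_pointwise {m : ℕ} {H : (Fin m → ℝ) → ℝ} {K κ : ℝ} (hK : 0 < K) (hκ : 0 < κ)
    (hHb : ∀ s, |H s| ≤ K * Real.exp (κ * ∑ i, |s i|)) (R : ℝ) (s : Fin m → ℝ) :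
    |H s - H s * cutoff m R s| ≤ K * Real.exp (-(κ * R)) * Real.exp ((2*κ) * ∑ i, |s i|) := by
  by_cases hs : ‖s‖ ≤ R
  · rw [cutoff_eq_one m R hs, mul_one, sub_self, abs_zero]
    positivity
  · push_neg at hs
    have hRsum : R ≤ ∑ i, |s i| := le_trans hs.le (norm_le_sum_abs s)
    have h1 : |H s - H s * cutoff m R s| = |H s| * (1 - cutoff m R s) := by
      rw [show H s - H s * cutoff m R s = H s * (1 - cutoff m R s) by ring, abs_mul]
      congr 1
      exact abs_of_nonneg (by linarith [cutoff_le_one m R s])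
    have h2 : |H s| * (1 - cutoff m R s) ≤ |H s| * 1 := by
      refine mul_le_mul_of_nonneg_left ?_ (abs_nonneg _)
      linarith [cutoff_nonneg m R s]
    have h3 : |H s| ≤ K * Real.exp (κ * ∑ i, |s i|) := hHb s
    have h4 : K * Real.exp (κ * ∑ i, |s i|)
        ≤ K * Real.exp (-(κ * R)) * Real.exp ((2*κ) * ∑ i, |s i|) := by
      rw [mul_assoc, ← Real.exp_add]
      refine mul_le_mul_of_nonneg_left (Real.exp_le_exp.mpr ?_) hK.le
      have hsum_nonneg : 0 ≤ ∑ i, |s i| := Finset.sum_nonneg fun i _ => abs_nonneg _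
      nlinarith
    calc |H s - H s * cutoff m R s| = |H s| * (1 - cutoff m R s) := h1
      _ ≤ |H s| * 1 := h2
      _ = |H s| := mul_one _
      _ ≤ K * Real.exp (κ * ∑ i, |s i|) := h3
      _ ≤ _ := h4

/-- truncation error bound in the integral -/
lemma trunc_integral_bound {c : ℝ} (hc : 0 < c) {C : ℝ} (hC : 0 < C) (m : ℕ)
    {r' : Measure ℝ} [IsProbabilityMeasure r'] (hsupp' : r' (Set.Icc (-C) C)ᶜ = 0)
    {H : (Fin m → ℝ) → ℝ} (hH : Continuous H) {K κ : ℝ} (hK : 0 < K) (hκ : 0 < κ)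
    (hHb : ∀ s, |H s| ≤ K * Real.exp (κ * ∑ i, |s i|)) (R : ℝ) :
    |(∫ s, H s ∂(Measure.pi fun _ : Fin m => cPoisson c r'))
      - ∫ s, H s * cutoff m R s ∂(Measure.pi fun _ : Fin m => cPoisson c r')|
      ≤ K * Real.exp (-(κ * R)) * (Real.exp (c * Real.exp ((2*κ) * C)))^m := by
  haveI := cPoisson_isProbabilityMeasure hc r'
  have hHint : Integrable H (Measure.pi fun _ : Fin m => cPoisson c r') :=
    integrable_expbound hc hC m hsupp' hH hK hκ hHb
  have hHχint : Integrable (fun s => H s * cutoff m R s)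
      (Measure.pi fun _ : Fin m => cPoisson c r') := by
    refine hHint.abs.mono' ((hH.mul (cutoff_continuous m R)).aestronglyMeasurable) ?_
    refine Filter.Eventually.of_forall fun s => ?_
    rw [Real.norm_eq_abs, abs_mul]
    calc |H s| * |cutoff m R s| ≤ |H s| * 1 := by
          refine mul_le_mul_of_nonneg_left ?_ (abs_nonneg _)
          rw [abs_of_nonneg (cutoff_nonneg m R s)]
          exact cutoff_le_one m R s
      _ = |H s| := mul_one _
  rw [← integral_sub hHint hHχint]
  have hnorm := norm_integral_le_lintegral_norm (μ := Measure.pi fun _ : Fin m => cPoisson c r')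
    (f := fun s => H s - H s * cutoff m R s)
  rw [Real.norm_eq_abs] at hnorm
  refine le_trans hnorm ?_
  have hlin : ∫⁻ s, ENNReal.ofReal ‖H s - H s * cutoff m R s‖
        ∂(Measure.pi fun _ : Fin m => cPoisson c r')
      ≤ ENNReal.ofReal (K * Real.exp (-(κ * R)))
        * (ENNReal.ofReal (Real.exp (c * Real.exp ((2*κ) * C))))^m := by
    calc ∫⁻ s, ENNReal.ofReal ‖H s - H s * cutoff m R s‖
          ∂(Measure.pi fun _ : Fin m => cPoisson c r')
        ≤ ∫⁻ s, ENNReal.ofReal (K * Real.exp (-(κ * R)))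
            * ENNReal.ofReal (Real.exp ((2*κ) * ∑ i, |s i|))
            ∂(Measure.pi fun _ : Fin m => cPoisson c r') := by
          refine lintegral_mono fun s => ?_
          rw [← ENNReal.ofReal_mul (by positivity)]
          refine ENNReal.ofReal_le_ofReal ?_
          rw [Real.norm_eq_abs]
          simpa [mul_assoc] using trunc_pointwise hK hκ hHb R s
      _ = ENNReal.ofReal (K * Real.exp (-(κ * R)))
            * ∫⁻ s, ENNReal.ofReal (Real.exp ((2*κ) * ∑ i, |s i|))
              ∂(Measure.pi fun _ : Fin m => cPoisson c r') :=
          lintegral_const_mul' _ _ (by simp)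
      _ ≤ _ := mul_le_mul_right (lintegral_pi_exp_le m _ (by positivity)
            (cPoisson_exp_moment_le hc hC.le (by positivity) hsupp')) _
  have hne : ENNReal.ofReal (K * Real.exp (-(κ * R)))
      * (ENNReal.ofReal (Real.exp (c * Real.exp ((2*κ) * C))))^m ≠ ⊤ := by
    refine ENNReal.mul_ne_top ENNReal.ofReal_ne_top ?_
    exact (ENNReal.pow_lt_top ENNReal.ofReal_lt_top).ne
  calc (∫⁻ s, ENNReal.ofReal ‖H s - H s * cutoff m R s‖
        ∂(Measure.pi fun _ : Fin m => cPoisson c r')).toReal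
      ≤ (ENNReal.ofReal (K * Real.exp (-(κ * R)))
        * (ENNReal.ofReal (Real.exp (c * Real.exp ((2*κ) * C))))^m).toReal :=
        ENNReal.toReal_mono hne hlin
    _ = K * Real.exp (-(κ * R)) * (Real.exp (c * Real.exp ((2*κ) * C)))^m := by
        rw [← ENNReal.ofReal_pow (Real.exp_nonneg _),
          ← ENNReal.ofReal_mul (by positivity), ENNReal.toReal_ofReal (by positivity)]

/-- if probability measures `r_ε`, all supported in `[-C,C]`, converge
weakly to `r` as `ε ↘ 0`, then for every continuous exponentially bounded
`H : ℝ^m → ℝ` the integrals with respect to the `m`-fold products of the compound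
Poisson measures converge:
`∫ H d(ρ_{c,r_ε})^{⊗m} → ∫ H d(ρ_{c,r})^{⊗m}`. -/
theorem cPoisson_product_integral_tendsto
    (C : ℝ) (hC : 0 < C) (c : ℝ) (hc : 0 < c) (m : ℕ) (hm : 1 ≤ m)
    (rε : ℝ → Measure ℝ) (r : Measure ℝ)
    (hprobε : ∀ ε ∈ Set.Ioc (0 : ℝ) 1, IsProbabilityMeasure (rε ε))
    (hprob : IsProbabilityMeasure r)
    (hsuppε : ∀ ε ∈ Set.Ioc (0 : ℝ) 1, rε ε (Set.Icc (-C) C)ᶜ = 0)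
    (hsupp : r (Set.Icc (-C) C)ᶜ = 0)
    (hweak : ∀ f : BoundedContinuousFunction ℝ ℝ,
      Filter.Tendsto (fun ε => ∫ x, f x ∂(rε ε)) (nhdsWithin 0 (Set.Ioc 0 1))
        (nhds (∫ x, f x ∂r)))
    (H : (Fin m → ℝ) → ℝ) (hH : Continuous H)
    (K κ : ℝ) (hK : 0 < K) (hκ : 0 < κ)
    (hHb : ∀ s, |H s| ≤ K * Real.exp (κ * ∑ i, |s i|)) :
    Filter.Tendsto
      (fun ε => ∫ s, H s ∂(Measure.pi fun _ : Fin m => cPoisson c (rε ε)))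
      (nhdsWithin 0 (Set.Ioc 0 1))
      (nhds (∫ s, H s ∂(Measure.pi fun _ : Fin m => cPoisson c r))) := by
  haveI := hprob
  haveI := cPoisson_isProbabilityMeasure hc r
  rw [Metric.tendsto_nhds]
  intro δ hδ
  set Q : ℝ := (Real.exp (c * Real.exp ((2*κ) * C)))^m with hQ
  have htail : Tendsto (fun R : ℝ => K * Real.exp (-(κ * R)) * Q) atTop (nhds 0) := by
    have h1 : Tendsto (fun R : ℝ => κ * R) atTop atTop :=
      Tendsto.const_mul_atTop hκ tendsto_id
    have h2 : Tendsto (fun R : ℝ => Real.exp (-(κ * R))) atTop (nhds 0) := by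
      have := Real.tendsto_exp_neg_atTop_nhds_zero.comp h1
      simpa [Function.comp_def] using this
    have h3 := (h2.const_mul K).mul_const Q
    simpa using h3
  obtain ⟨R, hR⟩ : ∃ R : ℝ, K * Real.exp (-(κ * R)) * Q < δ/3 :=
    (htail.eventually (gt_mem_nhds (show (0:ℝ) < δ/3 by linarith))).exists
  have hHχ_cont : Continuous (fun s => H s * cutoff m R s) := hH.mul (cutoff_continuous m R)
  have hHχ_cs : HasCompactSupport (fun s => H s * cutoff m R s) := by
    refine HasCompactSupport.intro (K := Metric.closedBall 0 (R+1))
      (isCompact_closedBall _ _) (fun s hs => ?_)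
    rw [Metric.mem_closedBall, dist_zero_right, not_le] at hs
    rw [cutoff_eq_zero m R hs.le, mul_zero]
  have hmid := (Metric.tendsto_nhds.mp (pi_cPoisson_integral_tendsto hC hc hprobε hprob
    hsuppε hsupp hweak m _ hHχ_cont hHχ_cs)) (δ/3) (by linarith)
  filter_upwards [self_mem_nhdsWithin, hmid] with ε hεIoc hmidε
  haveI := hprobε ε hεIoc
  haveI := cPoisson_isProbabilityMeasure hc (rε ε)
  have t1 := trunc_integral_bound hc hC m (hsuppε ε hεIoc) hH hK hκ hHb R
  have t2 := trunc_integral_bound hc hC m hsupp hH hK hκ hHb R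
  rw [← hQ] at t1 t2
  rw [Real.dist_eq] at hmidε ⊢
  set a : ℝ := ∫ s, H s ∂(Measure.pi fun _ : Fin m => cPoisson c (rε ε))
  set b : ℝ := ∫ s, H s * cutoff m R s ∂(Measure.pi fun _ : Fin m => cPoisson c (rε ε))
  set b' : ℝ := ∫ s, H s * cutoff m R s ∂(Measure.pi fun _ : Fin m => cPoisson c r)
  set a' : ℝ := ∫ s, H s ∂(Measure.pi fun _ : Fin m => cPoisson c r)
  have hsplit : a - a' = (a - b) + (b - b') + (b' - a') := by ring
  have habs : |a - a'| ≤ |a - b| + |b - b'| + |b' - a'| := by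
    rw [hsplit]
    exact le_trans (abs_add_le _ _) (add_le_add_left (abs_add_le _ _) _)
  have h3 : |b' - a'| ≤ K * Real.exp (-(κ * R)) * Q := by rw [abs_sub_comm]; exact t2
  have : |a - a'| < δ/3 + δ/3 + δ/3 := by
    refine lt_of_le_of_lt habs ?_
    have := lt_of_le_of_lt t1 hR
    have := lt_of_le_of_lt h3 hR
    gcongr
  linarith [this]
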